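/- Fix real numbers λ > 0, a, b, L > 0 and k with |k| < 1. If β ∈ ℝ and F_{a,b,λ,k,L}(i·β) = 0, then β = 0. -/

import Mathlib

/-- The branch `η(σ)` of the square root of `((λ+1)²σ² − 4λab)/(4λ²)` given by the principal
complex power; its square is always `((λ+1)²σ² − 4λab)/(4λ²)`. -/
noncomputable def charEta (lam a b : ℝ) (σ : ℂ) : ℂ :=
  ((((lam : ℂ) + 1) ^ 2 * σ ^ 2 - 4 * (lam : ℂ) * a * b) / (4 * (lam : ℂ) ^ 2)) ^ ((1 : ℂ) / 2)

open Classical in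
/-- The characteristic function `F_{a,b,λ,k,L}(σ) = (k−1)cosh(ηL) −
((k+1)((λ+1)/(2λ))σ + (kb/λ + a))·sinh(ηL)/η`, with `sinh(ηL)/η` interpreted as `L` when
`η = 0`.  The value does not depend on the choice of the square root `η`. -/
noncomputable def Fchar (lam a b k L : ℝ) (σ : ℂ) : ℂ :=
  ((k : ℂ) - 1) * Complex.cosh (charEta lam a b σ * L) -
    (((k : ℂ) + 1) * (((lam : ℂ) + 1) / (2 * (lam : ℂ))) * σ + ((k : ℂ) * b / lam + a)) *
      (if charEta lam a b σ = 0 then (L : ℂ)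
       else Complex.sinh (charEta lam a b σ * L) / charEta lam a b σ)

/-- For `λ > 0`, `L > 0` and `|k| < 1`, the only possible purely imaginary
zero of `F_{a,b,λ,k,L}` is `σ = 0`. -/
theorem stmt_9 (lam a b L k : ℝ) (hlam : 0 < lam) (hL : 0 < L) (hk : |k| < 1)
    (β : ℝ) (h : Fchar lam a b k L (Complex.I * (β : ℂ)) = 0) : β = 0 := by
  set η := charEta lam a b (Complex.I * (β : ℂ)) with hηdef
  have hη2 : η ^ 2 = ((-(lam+1)^2*β^2 - 4*lam*a*b)/(4*lam^2) : ℝ) := by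
    have h2 : ((1:ℂ)/2) = ((2:ℕ):ℂ)⁻¹ := by norm_num
    rw [hηdef, charEta, h2, Complex.cpow_nat_inv_pow _ (by norm_num)]
    push_cast [mul_pow, Complex.I_sq]
    ring
  have him0 : η.re * η.im = 0 := by
    have h1 : (η * η).im = 0 := by
      rw [← sq, hη2]; exact Complex.ofReal_im _
    rw [Complex.mul_im] at h1
    linarith
  obtain ⟨Cr, Sr, hC, hS, hkey⟩ :
      ∃ Cr Sr : ℝ, Complex.cosh (η * L) = (Cr : ℂ) ∧
        (if η = 0 then (L : ℂ) else Complex.sinh (η * L) / η) = (Sr : ℂ) ∧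
        (Sr = 0 → Cr ^ 2 = 1) := by
    by_cases hη0 : η = 0
    · exact ⟨1, L, by simp [hη0], by simp [hη0], fun hSr => absurd hSr hL.ne'⟩
    · rcases mul_eq_zero.mp him0 with hre | him
      · -- η purely imaginary: η = y*I
        set y := η.im with hy
        have hyne : y ≠ 0 := by
          intro h0
          exact hη0 (Complex.ext (by simp [hre]) (by simp [← hy, h0]))
        have hη : η = (y : ℂ) * Complex.I := by
          apply Complex.ext <;> simp [hre, ← hy]
        have hmul : (y : ℂ) * Complex.I * L = ((y*L : ℝ) : ℂ) * Complex.I := by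
          push_cast; ring
        refine ⟨Real.cos (y*L), Real.sin (y*L) / y, ?_, ?_, ?_⟩
        · rw [hη, hmul, Complex.cosh_mul_I, ← Complex.ofReal_cos]
        · rw [if_neg hη0, hη, hmul, Complex.sinh_mul_I, ← Complex.ofReal_sin,
            mul_div_mul_right _ _ Complex.I_ne_zero]
          push_cast
          ring
        · intro hSr
          have hsin : Real.sin (y*L) = 0 := by
            field_simp at hSr <;> simpa using hSr
          have := Real.sin_sq_add_cos_sq (y*L)
          nlinarith
      · -- η real
        set x := η.re with hx
        have hxne : x ≠ 0 := by
          intro h0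
          exact hη0 (Complex.ext (by simp [← hx, h0]) (by simp [him]))
        have hη : η = (x : ℂ) := by
          apply Complex.ext <;> simp [him, ← hx]
        have hmul : (x : ℂ) * L = ((x*L : ℝ) : ℂ) := by push_cast; ring
        refine ⟨Real.cosh (x*L), Real.sinh (x*L) / x, ?_, ?_, ?_⟩
        · rw [hη, hmul, ← Complex.ofReal_cosh]
        · rw [if_neg hη0, hη, hmul, ← Complex.ofReal_sinh]
          push_cast
          try ring
        · intro hSr
          have hsinh : Real.sinh (x*L) = 0 := by
            field_simp at hSr <;> simpa using hSr
          have hxL : x * L = 0 := Real.sinh_eq_zero.mp hsinh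
          exact absurd hxL (mul_ne_zero hxne hL.ne')
  rw [Fchar, ← hηdef, hC, hS] at h
  have hlamne : lam ≠ 0 := hlam.ne'
  have h' : (((k-1)*Cr - (k*b/lam + a)*Sr : ℝ) : ℂ)
      + ((-((k+1)*((lam+1)/(2*lam))*β*Sr) : ℝ) : ℂ) * Complex.I = 0 := by
    rw [← h]; push_cast; ring
  rw [Complex.ext_iff] at h'
  obtain ⟨hre, him⟩ := h'
  simp only [Complex.add_re, Complex.add_im, Complex.mul_re, Complex.mul_im,
    Complex.I_re, Complex.I_im, Complex.ofReal_re, Complex.ofReal_im,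
    Complex.zero_re, Complex.zero_im, mul_zero, mul_one, zero_mul, sub_zero,
    add_zero, zero_add, zero_sub, neg_neg, neg_eq_zero] at hre him
  have hk' := abs_lt.mp hk
  have hSrne : Sr ≠ 0 := by
    intro hSr
    have hCr1 := hkey hSr
    rw [hSr] at hre
    have hk1 : k - 1 ≠ 0 := by intro h0; linarith
    have hCr0 : Cr = 0 := by
      have : (k-1)*Cr = 0 := by linarith
      exact (mul_eq_zero.mp this).resolve_left hk1
    rw [hCr0] at hCr1
    norm_num at hCr1
  have hP : (k+1)*((lam+1)/(2*lam)) ≠ 0 := by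
    have h1 : (0:ℝ) < (lam+1)/(2*lam) := by positivity
    have h2 : (0:ℝ) < k + 1 := by linarith
    positivity
  have hprod : (k+1)*((lam+1)/(2*lam))*β*Sr = 0 := by linarith
  rcases mul_eq_zero.mp hprod with h1 | h1
  · rcases mul_eq_zero.mp h1 with h2 | h2
    · exact absurd h2 hP
    · exact h2
  · exact absurd h1 hSrne
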